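/- Almost surely, τ_∞ < ∞: the passage time from the origin to infinity in f-weighted first passage percolation on ℤ^d with α > 1 is almost surely finite. -/

import Mathlib

open MeasureTheory Metric
open scoped ENNReal NNReal

/-- The `i`th standard unit vector of `ℤ^d`. -/
def unitZ (d : ℕ) (i : Fin d) : Fin d → ℤ := fun j => if j = i then 1 else 0

/-- The embedding of `ℤ^d` into Euclidean space `ℝ^d`. -/
def toEuc {d : ℕ} (v : Fin d → ℤ) : EuclideanSpace ℝ (Fin d) := WithLp.toLp 2 (fun j => (v j : ℝ))

/-- The midpoint of the nearest-neighbor edge of `ℤ^d` from `e.1` to `e.1 + unitZ d e.2`,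
as a point of `ℝ^d`. Edges of `ℤ^d` are encoded by pairs `(v, i)`, representing the edge
from `v` to `v + eᵢ`. -/
noncomputable def midpt {d : ℕ} (e : (Fin d → ℤ) × Fin d) : EuclideanSpace ℝ (Fin d) :=
  WithLp.toLp 2 (fun j => (e.1 j : ℝ) + if j = e.2 then 1 / 2 else 0)

/-- The first passage time `T(u,v)`: the infimum, over all nearest-neighbor paths
`p 0 = u, …, p n = v` (with `e k` the edge traversed at step `k`), of the sum of the
edge passage times `X (e k) ω`. -/
noncomputable def passT {d : ℕ} {Ω : Type*} (X : ((Fin d → ℤ) × Fin d) → Ω → ℝ)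
    (u v : Fin d → ℤ) (ω : Ω) : ℝ≥0∞ :=
  ⨅ (n : ℕ) (p : Fin (n + 1) → (Fin d → ℤ)) (e : Fin n → ((Fin d → ℤ) × Fin d))
    (_ : p 0 = u) (_ : p (Fin.last n) = v)
    (_ : ∀ k : Fin n,
      (p k.castSucc = (e k).1 ∧ p k.succ = (e k).1 + unitZ d (e k).2) ∨
      (p k.succ = (e k).1 ∧ p k.castSucc = (e k).1 + unitZ d (e k).2)),
    ∑ k : Fin n, ENNReal.ofReal (X (e k) ω)

/-- The passage time from `0` to `∞`: `τ_∞ = sup_n inf { T(0,v) : |v| > n }`. -/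
noncomputable def tauInf {d : ℕ} {Ω : Type*} (X : ((Fin d → ℤ) × Fin d) → Ω → ℝ)
    (ω : Ω) : ℝ≥0∞ :=
  ⨆ n : ℕ, ⨅ (v : Fin d → ℤ) (_ : (n : ℝ) < ‖toEuc v‖), passT X 0 v ω

theorem stmt18 (d : ℕ) (hd : 0 < d) (α : ℝ) (hα : 1 < α)
    (f₀ : EuclideanSpace ℝ (Fin d) → ℝ) (K : NNReal)
    (hLip : LipschitzOnWith K f₀ (sphere (0 : EuclideanSpace ℝ (Fin d)) 1))
    (hpos : ∀ z ∈ sphere (0 : EuclideanSpace ℝ (Fin d)) 1, 0 < f₀ z)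
    (f : EuclideanSpace ℝ (Fin d) → ℝ)
    (hf : ∀ z : EuclideanSpace ℝ (Fin d), z ≠ 0 → f z = ‖z‖ ^ α * f₀ (‖z‖⁻¹ • z))
    {Ω : Type*} [MeasurableSpace Ω] (ℙ : Measure Ω) [IsProbabilityMeasure ℙ]
    (X : ((Fin d → ℤ) × Fin d) → Ω → ℝ)
    (hmeas : ∀ e, Measurable (X e))
    (hindep : ProbabilityTheory.iIndepFun X ℙ)
    (hexp : ∀ (e : (Fin d → ℤ) × Fin d) (t : ℝ), 0 ≤ t →
      ℙ {ω | t < X e ω} = ENNReal.ofReal (Real.exp (-(f (midpt e)) * t))) :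
    ∀ᵐ ω ∂ℙ, tauInf X ω < ⊤ := by
  classical
  set i0 : Fin d := ⟨0, hd⟩ with hi0
  set vN : ℕ → (Fin d → ℤ) := fun m j => if j = i0 then (m : ℤ) else 0 with hvN
  set E : ℕ → ((Fin d → ℤ) × Fin d) := fun k => (vN k, i0) with hE
  set c : ℝ := f₀ (EuclideanSpace.single i0 (1 : ℝ)) with hcdef
  have hone : EuclideanSpace.single i0 (1 : ℝ) ∈ sphere (0 : EuclideanSpace ℝ (Fin d)) 1 := by
    simp [mem_sphere_iff_norm, EuclideanSpace.norm_single]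
  have hc : 0 < c := hpos _ hone
  -- midpoint of the k-th axis edge
  have hmid : ∀ k : ℕ, midpt (E k) = EuclideanSpace.single i0 ((k : ℝ) + 1 / 2) := by
    intro k
    ext j
    by_cases hj : j = i0 <;>
      simp [midpt, E, vN, EuclideanSpace.single_apply, hj]
  have hrate : ∀ k : ℕ, f (midpt (E k)) = ((k : ℝ) + 1 / 2) ^ α * c := by
    intro k
    have hk2 : (0 : ℝ) < (k : ℝ) + 1 / 2 := by positivity
    have hnorm : ‖midpt (E k)‖ = (k : ℝ) + 1 / 2 := by
      rw [hmid k, EuclideanSpace.norm_single, Real.norm_eq_abs, abs_of_pos hk2]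
    have hne : midpt (E k) ≠ 0 := by
      intro h
      rw [h, norm_zero] at hnorm
      linarith
    have hsm : ((k : ℝ) + 1 / 2)⁻¹ • EuclideanSpace.single i0 ((k : ℝ) + 1 / 2)
        = EuclideanSpace.single i0 (1 : ℝ) := by
      ext j
      by_cases hj : j = i0
      · simp only [PiLp.smul_apply, EuclideanSpace.single_apply, hj, if_pos rfl, smul_eq_mul]
        exact inv_mul_cancel₀ hk2.ne'
      · simp [EuclideanSpace.single_apply, hj]
    rw [hf _ hne, hnorm, hmid k, hsm]
  -- positivity of each X (E k) a.e.
  have hXpos : ∀ e, 0 ≤ᵐ[ℙ] X e := by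
    intro e
    have h0 := hexp e 0 le_rfl
    simp only [mul_zero, Real.exp_zero, ENNReal.ofReal_one] at h0
    have hms : MeasurableSet {ω | 0 < X e ω} := measurableSet_lt measurable_const (hmeas e)
    have hcompl : ℙ {ω | 0 < X e ω}ᶜ = 0 := by
      rw [measure_compl hms (measure_ne_top _ _), h0, measure_univ, tsub_self]
    have hsub : {ω | ¬ (0 : Ω → ℝ) ω ≤ X e ω} ⊆ {ω | 0 < X e ω}ᶜ := by
      intro ω hω
      simp only [Set.mem_setOf_eq, Pi.zero_apply, not_le] at hω
      simp only [Set.mem_compl_iff, Set.mem_setOf_eq, not_lt]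
      linarith
    exact ae_iff.mpr (measure_mono_null hsub hcompl)
  -- expected value of each edge weight
  have hint : ∀ k : ℕ, ∫⁻ ω, ENNReal.ofReal (X (E k) ω) ∂ℙ
      = ENNReal.ofReal ((((k : ℝ) + 1 / 2) ^ α * c)⁻¹) := by
    intro k
    set r : ℝ := ((k : ℝ) + 1 / 2) ^ α * c with hrdef
    have hk2 : (0 : ℝ) < (k : ℝ) + 1 / 2 := by positivity
    have hr : 0 < r := mul_pos (Real.rpow_pos_of_pos hk2 α) hc
    rw [lintegral_eq_lintegral_meas_lt ℙ (hXpos (E k)) (hmeas (E k)).aemeasurable]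
    have hcong : ∫⁻ t in Set.Ioi (0:ℝ), ℙ {a | t < X (E k) a}
        = ∫⁻ t in Set.Ioi (0:ℝ), ENNReal.ofReal (Real.exp (-r * t)) := by
      refine setLIntegral_congr_fun measurableSet_Ioi (fun t ht => ?_)
      rw [hexp (E k) t (le_of_lt ht), hrate k]
    rw [hcong]
    rw [← ofReal_integral_eq_lintegral_ofReal
        (exp_neg_integrableOn_Ioi 0 hr)
        (ae_of_all _ fun t => (Real.exp_pos _).le)]
    congr 1
    have : ∀ t : ℝ, Real.exp (-r * t) = Real.exp (-(r * t)) := by intro t; ring_nf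
    calc ∫ t in Set.Ioi (0:ℝ), Real.exp (-r * t)
        = ∫ t in Set.Ioi (0:ℝ), Real.exp (-(r * t)) := by simp_rw [this]
      _ = r⁻¹ • ∫ t in Set.Ioi (r * 0), Real.exp (-t) :=
          integral_comp_mul_left_Ioi (fun x => Real.exp (-x)) 0 hr
      _ = r⁻¹ := by
          rw [mul_zero, integral_exp_neg_Ioi, neg_zero, Real.exp_zero, smul_eq_mul, mul_one]
  -- summability of the expected values
  have hsummable : Summable (fun k : ℕ => (((k : ℝ) + 1 / 2) ^ α * c)⁻¹) := by
    have h1 : Summable (fun k : ℕ => (((k : ℝ) + 1) ^ α)⁻¹) := by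
      have := (Real.summable_nat_rpow_inv (p := α)).2 hα
      have h2 := this.comp_injective Nat.succ_injective
      refine h2.congr fun k => ?_
      have : ((Nat.succ k : ℝ)) = (k : ℝ) + 1 := by push_cast; ring
      simp only [Function.comp_apply, this]
    have h2 : Summable (fun k : ℕ => (2 : ℝ) ^ α * c⁻¹ * (((k : ℝ) + 1) ^ α)⁻¹) :=
      h1.mul_left _
    refine Summable.of_nonneg_of_le (fun k => by positivity) (fun k => ?_) h2
    have hk1 : (0 : ℝ) < (k : ℝ) + 1 := by positivity
    have hk2 : (0 : ℝ) < (k : ℝ) + 1 / 2 := by positivity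
    have hle : ((k : ℝ) + 1) / 2 ≤ (k : ℝ) + 1 / 2 := by linarith
    have hrle : (((k : ℝ) + 1) / 2) ^ α ≤ ((k : ℝ) + 1 / 2) ^ α :=
      Real.rpow_le_rpow (by positivity) hle (by linarith)
    have hrpos : (0 : ℝ) < (((k : ℝ) + 1) / 2) ^ α :=
      Real.rpow_pos_of_pos (by positivity) α
    have hinv : (((k : ℝ) + 1 / 2) ^ α)⁻¹ ≤ ((((k : ℝ) + 1) / 2) ^ α)⁻¹ :=
      inv_anti₀ hrpos hrle
    have hdiv : ((((k : ℝ) + 1) / 2) ^ α)⁻¹ = (2 : ℝ) ^ α * (((k : ℝ) + 1) ^ α)⁻¹ := by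
      rw [Real.div_rpow hk1.le (by norm_num : (0:ℝ) ≤ 2), inv_div]
      ring
    calc (((k : ℝ) + 1 / 2) ^ α * c)⁻¹
        = (((k : ℝ) + 1 / 2) ^ α)⁻¹ * c⁻¹ := by rw [mul_inv]
      _ ≤ ((((k : ℝ) + 1) / 2) ^ α)⁻¹ * c⁻¹ := by
          exact mul_le_mul_of_nonneg_right hinv (by positivity)
      _ = (2 : ℝ) ^ α * c⁻¹ * (((k : ℝ) + 1) ^ α)⁻¹ := by rw [hdiv]; ring
  -- the total sum S is a.e. finite
  set S : Ω → ℝ≥0∞ := fun ω => ∑' k : ℕ, ENNReal.ofReal (X (E k) ω) with hSdef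
  have hSmeas : Measurable S :=
    Measurable.ennreal_tsum fun k => (hmeas (E k)).ennreal_ofReal
  have hSint : ∫⁻ ω, S ω ∂ℙ < ⊤ := by
    rw [hSdef]
    simp only
    rw [lintegral_tsum fun k => ((hmeas (E k)).ennreal_ofReal).aemeasurable]
    have : ∑' k : ℕ, ∫⁻ ω, ENNReal.ofReal (X (E k) ω) ∂ℙ
        = ∑' k : ℕ, ENNReal.ofReal ((((k : ℝ) + 1 / 2) ^ α * c)⁻¹) := by
      exact tsum_congr fun k => hint k
    rw [this, ← ENNReal.ofReal_tsum_of_nonneg (fun k => by positivity) hsummable]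
    exact ENNReal.ofReal_lt_top
  have hae : ∀ᵐ ω ∂ℙ, S ω < ⊤ := ae_lt_top hSmeas hSint.ne
  -- deterministic step: tauInf X ω ≤ S ω
  filter_upwards [hae] with ω hω
  refine lt_of_le_of_lt ?_ hω
  refine iSup_le fun n => ?_
  have hnormv : ‖toEuc (vN (n + 1))‖ = (n : ℝ) + 1 := by
    have : toEuc (vN (n + 1)) = EuclideanSpace.single i0 (((n : ℝ) + 1)) := by
      ext j
      by_cases hj : j = i0 <;> simp [toEuc, vN, EuclideanSpace.single_apply, hj]
    rw [this, EuclideanSpace.norm_single, Real.norm_eq_abs, abs_of_pos (by positivity)]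
  refine iInf₂_le_of_le (vN (n + 1)) (by rw [hnormv]; linarith) ?_
  -- bound passT by the sum along the axis path
  have hpass : passT X 0 (vN (n + 1)) ω
      ≤ ∑ k : Fin (n + 1), ENNReal.ofReal (X (E k.val) ω) := by
    have h0 : (fun m : Fin (n + 2) => vN m.val) 0 = (0 : Fin d → ℤ) := by
      funext j; simp [vN]
    have hlast : (fun m : Fin (n + 2) => vN m.val) (Fin.last (n + 1)) = vN (n + 1) := by
      simp [Fin.val_last]
    have hstep : ∀ k : Fin (n + 1),
        ((fun m : Fin (n + 2) => vN m.val) k.castSucc = (E k.val).1 ∧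
          (fun m : Fin (n + 2) => vN m.val) k.succ = (E k.val).1 + unitZ d (E k.val).2) ∨
        ((fun m : Fin (n + 2) => vN m.val) k.succ = (E k.val).1 ∧
          (fun m : Fin (n + 2) => vN m.val) k.castSucc = (E k.val).1 + unitZ d (E k.val).2) := by
      intro k
      left
      constructor
      · rfl
      · funext j
        by_cases hj : j = i0 <;>
          simp [vN, E, unitZ, hj, Fin.val_succ] <;> push_cast <;> ring
    exact iInf_le_of_le (n + 1) (iInf_le_of_le (fun m => vN m.val)
      (iInf_le_of_le (fun k => E k.val)
        (iInf_le_of_le h0 (iInf_le_of_le hlast (iInf_le _ hstep)))))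
  refine le_trans hpass ?_
  rw [Fin.sum_univ_eq_sum_range (fun k => ENNReal.ofReal (X (E k) ω)) (n + 1)]
  exact ENNReal.sum_le_tsum _
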